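/- Let f : ℕ → ℂ with |f(n)| ≤ 1 for all n, let k ≥ 1, h_1, …, h_k distinct non-negative integers, z > 1, u ≥ 1 with x ≥ z^u. Then Σ_{n ≤ x} ∏_{i=1}^k f(n+h_i) equals the same sum restricted to those n whose shifts all satisfy (n+h_i)_z ≤ z^u for all i ∈ {1,…,k}, up to an error O_{k,h_1,…,h_k}(x·e^{−u/2} + 1). -/

import Mathlib

set_option maxHeartbeats 1000000
open Finset



/-- helper: a prime dividing a product of prime powers is in the set -/
lemma prime_mem_of_dvd_prod_pow {s : Finset ℕ} {e : ℕ → ℕ} (hs : ∀ q ∈ s, q.Prime)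
    {p : ℕ} (hp : p.Prime) (h : p ∣ ∏ q ∈ s, q ^ e q) : p ∈ s := by
  obtain ⟨q, hq, hd⟩ := hp.prime.exists_mem_finset_dvd h
  have := hp.dvd_of_dvd_pow hd
  rwa [Nat.prime_dvd_prime_iff_eq hp (hs q hq) |>.mp this]

/-- The `z`-smooth part of `m`: the product of the prime powers `p ^ α` exactly
dividing `m` with `p ≤ z`. -/
noncomputable def smoothPart (z : ℝ) (m : ℕ) : ℕ :=
  ∏ p ∈ m.primeFactors.filter (fun p : ℕ => (p : ℝ) ≤ z), p ^ m.factorization p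

lemma smoothPart_dvd (z : ℝ) (m : ℕ) : smoothPart z m ∣ m := by
  rcases eq_or_ne m 0 with rfl | hm
  · exact dvd_zero _
  · calc smoothPart z m ∣ ∏ p ∈ m.primeFactors, p ^ m.factorization p :=
          Finset.prod_dvd_prod_of_subset _ _ _ (Finset.filter_subset _ _)
    _ = m := Nat.factorization_prod_pow_eq_self hm

lemma smoothPart_pos (z : ℝ) (m : ℕ) : 0 < smoothPart z m := by
  apply Finset.prod_pos
  intro p hp
  have := Nat.prime_of_mem_primeFactors (Finset.mem_filter.mp hp).1
  exact Nat.pow_pos this.pos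

lemma smoothPart_primes_le {z : ℝ} {m p : ℕ} (hp : p.Prime) (h : p ∣ smoothPart z m) :
    (p : ℝ) ≤ z := by
  have hmem := prime_mem_of_dvd_prod_pow
    (fun q hq => Nat.prime_of_mem_primeFactors (Finset.mem_filter.mp hq).1) hp h
  exact (Finset.mem_filter.mp hmem).2



/-- Lemma A: divisor sum of a "factorization-product" function. -/
lemma sum_divisors_prod_fact (f : ℕ → ℕ → ℝ) (hf : ∀ p, f p 0 = 1) {w : ℕ} (hw : w ≠ 0) :
    ∑ d ∈ w.divisors, ∏ p ∈ d.primeFactors, f p (d.factorization p)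
      = ∏ p ∈ w.primeFactors, ∑ j ∈ range (w.factorization p + 1), f p j := by
  classical
  set G : ArithmeticFunction ℝ :=
    ⟨fun d => if d = 0 then 0 else ∏ p ∈ d.primeFactors, f p (d.factorization p), by simp⟩ with hG
  have hGapp : ∀ d ≠ 0, G d = ∏ p ∈ d.primeFactors, f p (d.factorization p) := by
    intro d hd; simp [hG, hd]
  have hGpp : ∀ p j, p.Prime → G (p ^ j) = f p j := by
    intro p j hp
    rcases Nat.eq_zero_or_pos j with rfl | hj
    · simpa [hGapp 1 one_ne_zero] using (hf p).symm
    · rw [hGapp _ (pow_ne_zero _ hp.ne_zero)]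
      rw [Nat.primeFactors_pow _ hj.ne', hp.primeFactors]
      simp [hp.factorization_pow]
  have hGmult : G.IsMultiplicative := by
    rw [ArithmeticFunction.IsMultiplicative.iff_ne_zero]
    constructor
    · simp [hGapp 1 one_ne_zero]
    · intro m n hm hn hmn
      rw [hGapp _ (mul_ne_zero hm hn), hGapp m hm, hGapp n hn]
      rw [Nat.primeFactors_mul hm hn,
        Finset.prod_union (Nat.Coprime.disjoint_primeFactors hmn)]
      congr 1
      · apply Finset.prod_congr rfl
        intro p hp
        congr 1
        rw [Nat.factorization_mul hm hn]
        have hnp : p ∉ n.primeFactors :=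
          Finset.disjoint_left.mp (Nat.Coprime.disjoint_primeFactors hmn) hp
        rw [← Nat.support_factorization] at hnp
        simp [Finsupp.notMem_support_iff.mp hnp]
      · apply Finset.prod_congr rfl
        intro p hp
        congr 1
        rw [Nat.factorization_mul hm hn]
        have hnp : p ∉ m.primeFactors :=
          Finset.disjoint_right.mp (Nat.Coprime.disjoint_primeFactors hmn) hp
        rw [← Nat.support_factorization] at hnp
        simp [Finsupp.notMem_support_iff.mp hnp]
  have hstep : ∑ d ∈ w.divisors, G d
      = ∏ p ∈ w.primeFactors, ∑ j ∈ range (w.factorization p + 1), f p j := by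
    have hH : ((ArithmeticFunction.zeta : ArithmeticFunction ℕ) :
        ArithmeticFunction ℝ) * G |>.IsMultiplicative :=
      ArithmeticFunction.isMultiplicative_zeta.natCast.mul hGmult
    have h1 : (((ArithmeticFunction.zeta : ArithmeticFunction ℕ) :
        ArithmeticFunction ℝ) * G) w = ∑ d ∈ w.divisors, G d :=
      ArithmeticFunction.coe_zeta_mul_apply
    rw [← h1, hH.multiplicative_factorization _ hw,
      Nat.prod_factorization_eq_prod_primeFactors]
    apply Finset.prod_congr rfl
    intro p hp
    have hp' := Nat.prime_of_mem_primeFactors hp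
    rw [ArithmeticFunction.coe_zeta_mul_apply, Nat.sum_divisors_prime_pow hp']
    exact Finset.sum_congr rfl fun j _ => hGpp p j hp' 
  rw [← hstep]
  apply Finset.sum_congr rfl
  intro d hd
  exact (hGapp d (Nat.pos_of_mem_divisors hd).ne').symm



lemma theta_le (n : ℕ) :
    ∑ p ∈ (range (n + 1)).filter Nat.Prime, Real.log p ≤ n * Real.log 4 := by
  have h1 : (primorial n : ℝ) ≤ (4 : ℝ) ^ n := by
    exact_mod_cast primorial_le_4_pow n
  have hpos : 0 < primorial n := Finset.prod_pos fun p hp => ((Finset.mem_filter.mp hp).2).pos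
  have h2 : Real.log (primorial n) ≤ n * Real.log 4 := by
    calc Real.log (primorial n) ≤ Real.log ((4:ℝ) ^ n) := by
          apply Real.log_le_log (by exact_mod_cast hpos) h1
    _ = n * Real.log 4 := by rw [Real.log_pow]
  calc ∑ p ∈ (range (n + 1)).filter Nat.Prime, Real.log p
      = Real.log (∏ p ∈ (range (n + 1)).filter Nat.Prime, (p : ℝ)) := by
        rw [Real.log_prod]
        intro p hp
        exact_mod_cast ((Finset.mem_filter.mp hp).2).pos.ne'
    _ = Real.log (primorial n) := by
        rw [primorial]; push_cast; rfl
    _ ≤ n * Real.log 4 := h2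

lemma mertens : ∀ n : ℕ, 1 ≤ n →
    ∑ p ∈ (range (n + 1)).filter Nat.Prime, Real.log p / p ≤ 4 * Real.log n := by
  intro n
  induction n using Nat.strong_induction_on with
  | _ n ih =>
    intro hn
    rcases eq_or_lt_of_le hn with h1 | h2
    · subst h1
      have : (range 2).filter Nat.Prime = ∅ := by decide
      simp [this]
    -- n ≥ 2
    have hn2 : 2 ≤ n := h2
    have hhalf : n / 2 < n := Nat.div_lt_self (by omega) (by omega)
    have hhalf1 : 1 ≤ n / 2 := Nat.one_le_div_iff (by omega) |>.mpr (by omega)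
    have IH := ih (n / 2) hhalf hhalf1
    -- split primes ≤ n into ≤ n/2 and the window
    have hsub : (range (n / 2 + 1)).filter Nat.Prime ⊆ (range (n + 1)).filter Nat.Prime := by
      apply Finset.filter_subset_filter
      apply Finset.range_subset_range.mpr
      omega
    rw [← Finset.sum_sdiff hsub]
    have hwindow : ∑ p ∈ ((range (n + 1)).filter Nat.Prime) \ ((range (n / 2 + 1)).filter Nat.Prime),
        Real.log p / p ≤ 4 * Real.log 2 := by
      have hbd : ∀ p ∈ ((range (n + 1)).filter Nat.Prime) \ ((range (n / 2 + 1)).filter Nat.Prime),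
          Real.log p / p ≤ Real.log p * (2 / n) := by
        intro p hp
        rw [Finset.mem_sdiff, Finset.mem_filter, Finset.mem_range] at hp
        have hp1 : p.Prime := hp.1.2
        have hpn : p ≤ n := by omega
        have hplarge : (n : ℝ) < 2 * p := by
          have : n / 2 + 1 ≤ p := by
            by_contra hcon
            exact hp.2 (Finset.mem_filter.mpr ⟨Finset.mem_range.mpr (by omega), hp1⟩)
          have : n < 2 * p := by omega
          exact_mod_cast this
        have hlogp : 0 ≤ Real.log p := Real.log_nonneg (by exact_mod_cast hp1.one_lt.le)
        have : (1:ℝ)/p ≤ 2/n := by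
          rw [div_le_div_iff₀ (by exact_mod_cast hp1.pos) (by positivity)]
          nlinarith [hplarge]
        calc Real.log p / p = Real.log p * (1/p) := by ring
          _ ≤ Real.log p * (2/n) := by apply mul_le_mul_of_nonneg_left this hlogp
        
      calc ∑ p ∈ ((range (n + 1)).filter Nat.Prime) \ ((range (n / 2 + 1)).filter Nat.Prime), Real.log p / p ≤ ∑ p ∈ ((range (n + 1)).filter Nat.Prime) \ ((range (n / 2 + 1)).filter Nat.Prime), Real.log p * (2 / n) := Finset.sum_le_sum hbd
        _ ≤ ∑ p ∈ (range (n + 1)).filter Nat.Prime, Real.log p * (2 / n) := by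
            apply Finset.sum_le_sum_of_subset_of_nonneg (Finset.sdiff_subset)
            intro p hp _
            have hp1 := (Finset.mem_filter.mp hp).2
            have : 0 ≤ Real.log p := Real.log_nonneg (by exact_mod_cast hp1.one_lt.le)
            positivity
        _ = (∑ p ∈ (range (n + 1)).filter Nat.Prime, Real.log p) * (2 / n) := by
            rw [Finset.sum_mul]
        _ ≤ (n * Real.log 4) * (2 / n) := by
            apply mul_le_mul_of_nonneg_right (theta_le n) (by positivity)
        _ = 2 * Real.log 4 := by
            field_simp
        _ = 4 * Real.log 2 := by
            rw [show (4:ℝ) = 2 ^ 2 by norm_num, Real.log_pow]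
            push_cast
            ring
    have hIHbound : ∑ p ∈ (range (n / 2 + 1)).filter Nat.Prime, Real.log p / p
        ≤ 4 * Real.log (n / 2 : ℕ) := IH
    have hfinal : 4 * Real.log (n / 2 : ℕ) + 4 * Real.log 2 ≤ 4 * Real.log n := by
      have h1 : ((n / 2 : ℕ) : ℝ) ≤ (n : ℝ) / 2 := Nat.cast_div_le
      have h2 : Real.log ((n/2 : ℕ)) ≤ Real.log ((n:ℝ)/2) := by
        apply Real.log_le_log (by exact_mod_cast hhalf1) h1
      have h3 : Real.log ((n:ℝ)/2) = Real.log n - Real.log 2 := by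
        rw [Real.log_div (by positivity) (by norm_num)]
      linarith
    linarith



noncomputable def fg (σ : ℝ) (p j : ℕ) : ℝ :=
  if j = 0 then 1 else (p : ℝ) ^ (σ * j) - (p : ℝ) ^ (σ * ((j : ℝ) - 1))

lemma fg_zero (σ : ℝ) (p : ℕ) : fg σ p 0 = 1 := rfl

lemma fg_nonneg {σ : ℝ} (hσ : 0 ≤ σ) {p : ℕ} (hp : 1 ≤ (p : ℝ)) (j : ℕ) : 0 ≤ fg σ p j := by
  unfold fg
  rcases eq_or_ne j 0 with rfl | hj
  · norm_num
  · rw [if_neg hj]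
    have h1 : (1:ℝ) ≤ j := by
      have := Nat.one_le_iff_ne_zero.mpr hj
      exact_mod_cast this
    have : (p:ℝ) ^ (σ * ((j:ℝ)-1)) ≤ (p:ℝ) ^ (σ * j) := by
      apply Real.rpow_le_rpow_of_exponent_le hp
      nlinarith
    linarith

lemma fg_telescope (σ : ℝ) {p : ℕ} (hp : 0 < p) (k : ℕ) :
    ∑ j ∈ range (k + 1), fg σ p j = (p : ℝ) ^ (σ * k) := by
  induction k with
  | zero => simp [fg_zero, Real.rpow_zero]
  | succ k ih =>
    rw [Finset.sum_range_succ, ih]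
    unfold fg
    rw [if_neg (Nat.succ_ne_zero k)]
    push_cast
    ring_nf

/-- The per-prime local factor bound. -/
lemma local_factor_le {z : ℝ} (hz : 2 ≤ z) {p : ℕ} (hp : p.Prime) (hpz : (p : ℝ) ≤ z) (K : ℕ) :
    ∑ j ∈ range (K + 1), fg (2 * Real.log z)⁻¹ p j / (p : ℝ) ^ j
      ≤ Real.exp ((Real.exp 2⁻¹ / (1 - Real.exp 2⁻¹ / 2)) * (2 * Real.log z)⁻¹
          * Real.log p / p) := by
  set σ : ℝ := (2 * Real.log z)⁻¹ with hσdef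
  have hz1 : (1:ℝ) < z := lt_of_lt_of_le one_lt_two hz
  have hlogz : 0 < Real.log z := Real.log_pos hz1
  have hσpos : 0 < σ := by positivity
  have hp2 : (2:ℝ) ≤ (p:ℝ) := by exact_mod_cast hp.two_le
  have hp0 : (0:ℝ) < (p:ℝ) := by linarith
  have hp1 : (1:ℝ) < (p:ℝ) := by linarith
  have hlogp : 0 < Real.log p := Real.log_pos hp1
  -- σ * log p ≤ 1/2
  have hhalf : σ * Real.log p ≤ 2⁻¹ := by
    rw [hσdef]
    rw [inv_mul_le_iff₀ (by positivity)]
    have : Real.log p ≤ Real.log z := Real.log_le_log hp0 hpz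
    linarith
  -- p ^ σ ≤ exp (1/2)
  have hpσ : (p:ℝ) ^ σ ≤ Real.exp 2⁻¹ := by
    rw [← Real.exp_log hp0, ← Real.exp_mul]  -- guess: (exp (log p)) ^ σ = exp (log p * σ)
    exact Real.exp_le_exp.mpr (by linarith [hhalf])
  have hE2 : Real.exp 2⁻¹ < 2 := by
    nlinarith [Real.exp_one_lt_d9, Real.exp_pos (2⁻¹:ℝ),
      Real.exp_add (2⁻¹:ℝ) 2⁻¹, sq_nonneg (Real.exp 2⁻¹ - 2)]
  set r : ℝ := (p:ℝ) ^ (σ - 1) with hrdef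
  have hr0 : 0 ≤ r := (Real.rpow_pos_of_pos hp0 _).le
  have hrval : r = (p:ℝ)^σ / p := by
    rw [hrdef, Real.rpow_sub hp0, Real.rpow_one]
  have hrle : r ≤ Real.exp 2⁻¹ / 2 := by
    rw [hrval]
    exact div_le_div₀ (Real.exp_pos _).le hpσ (by norm_num) hp2
  have hδ : (0:ℝ) < 1 - Real.exp 2⁻¹ / 2 := by linarith
  have hr1 : r < 1 := by
    have : Real.exp 2⁻¹ / 2 < 1 := by linarith
    linarith [hrle]
  -- rewrite sum via sum_range_succ'
  rw [Finset.sum_range_succ']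
  have hterm : ∀ j : ℕ, fg σ p (j + 1) / (p:ℝ) ^ (j + 1) = (((p:ℝ)^σ - 1) / p) * r ^ j := by
    intro j
    unfold fg
    rw [if_neg (Nat.succ_ne_zero j)]
    have e1 : (p:ℝ) ^ (σ * ((j:ℕ)+1:ℝ)) = (p:ℝ)^(σ * j) * (p:ℝ)^σ := by
      rw [← Real.rpow_add hp0]; ring_nf
    have e2 : (p:ℝ) ^ (σ * (((j:ℕ)+1:ℝ) - 1)) = (p:ℝ)^(σ * j) := by
      norm_num
    have e3 : ((p:ℝ) ^ (j + 1) : ℝ) = (p:ℝ)^(j:ℕ) * p := by ring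
    have e4 : r ^ j = (p:ℝ)^(σ * j) / (p:ℝ)^(j:ℕ) := by
      rw [hrdef, ← Real.rpow_natCast ((p:ℝ)^(σ-1)) j, ← Real.rpow_mul hp0.le,
        ← Real.rpow_natCast (p:ℝ) j, ← Real.rpow_sub hp0]
      ring_nf
    have hpj : (0:ℝ) < (p:ℝ)^(j:ℕ) := by positivity
    push_cast
    push_cast at e1 e2
    rw [e1, e2, e3, e4]
    field_simp
  have hgeom : ∑ j ∈ range K, r ^ j ≤ 1 / (1 - r) := by
    have hgm := geom_sum_mul r K
    rw [le_div_iff₀ (by linarith)]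
    nlinarith [pow_nonneg hr0 K]
  have hfac : ((p:ℝ)^σ - 1) / p ≥ 0 := by
    have : (1:ℝ) ≤ (p:ℝ)^σ := by
      rw [show (1:ℝ) = (p:ℝ)^(0:ℝ) by rw [Real.rpow_zero]]
      exact Real.rpow_le_rpow_of_exponent_le hp1.le hσpos.le
    exact div_nonneg (by linarith) hp0.le
  have hsum1 : ∑ j ∈ range K, fg σ p (j + 1) / (p:ℝ) ^ (j + 1)
      ≤ (((p:ℝ)^σ - 1) / p) * (1 / (1 - r)) := by
    calc ∑ j ∈ range K, fg σ p (j + 1) / (p:ℝ) ^ (j + 1)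
        = ∑ j ∈ range K, (((p:ℝ)^σ - 1) / p) * r ^ j := by
          exact Finset.sum_congr rfl fun j _ => hterm j
      _ = (((p:ℝ)^σ - 1) / p) * ∑ j ∈ range K, r ^ j := by rw [Finset.mul_sum]
      _ ≤ _ := by apply mul_le_mul_of_nonneg_left hgeom hfac
  -- bound (p^σ - 1)
  have hexp_bound : (p:ℝ)^σ - 1 ≤ σ * Real.log p * Real.exp 2⁻¹ := by
    have hrw : (p:ℝ)^σ = Real.exp (σ * Real.log p) := by
      rw [Real.rpow_def_of_pos hp0]
      ring_nf
    rw [hrw]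
    set t := σ * Real.log p with ht
    have ht0 : 0 ≤ t := by positivity
    have h1 : Real.exp t - 1 ≤ t * Real.exp t := by
      have hh := mul_le_mul_of_nonneg_left (Real.add_one_le_exp (-t)) (Real.exp_pos t).le
      rw [Real.exp_neg, mul_inv_cancel₀ (Real.exp_pos t).ne'] at hh
      nlinarith [hh]
    have h2 : Real.exp t ≤ Real.exp 2⁻¹ := Real.exp_le_exp.mpr hhalf
    nlinarith
  have honeminus : 1 - Real.exp 2⁻¹ / 2 ≤ 1 - r := by linarith
  have hmain : fg σ p 0 / (p:ℝ)^(0:ℕ) + ∑ j ∈ range K, fg σ p (j+1) / (p:ℝ)^(j+1)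
      ≤ 1 + (Real.exp 2⁻¹ / (1 - Real.exp 2⁻¹ / 2)) * σ * Real.log p / p := by
    have h0 : fg σ p 0 / (p:ℝ)^(0:ℕ) = 1 := by simp [fg_zero]
    rw [h0]
    have hX : (((p:ℝ)^σ - 1) / p) * (1 / (1 - r))
        ≤ ((σ * Real.log p * Real.exp 2⁻¹) / p) * (1 / (1 - Real.exp 2⁻¹ / 2)) := by
      apply mul_le_mul
      · exact div_le_div_of_nonneg_right hexp_bound hp0.le
      · apply one_div_le_one_div_of_le hδ honeminus
      · exact one_div_nonneg.mpr (by linarith)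
      · positivity
    have hXeq : ((σ * Real.log p * Real.exp 2⁻¹) / p) * (1 / (1 - Real.exp 2⁻¹ / 2))
        = (Real.exp 2⁻¹ / (1 - Real.exp 2⁻¹ / 2)) * σ * Real.log p / p := by
      field_simp
    linarith [hsum1, hX.trans_eq hXeq]
  calc ∑ j ∈ range K, fg σ p (j+1) / (p:ℝ)^(j+1) + fg σ p 0 / (p:ℝ)^(0:ℕ)
      ≤ 1 + (Real.exp 2⁻¹ / (1 - Real.exp 2⁻¹ / 2)) * σ * Real.log p / p := by
        linarith [hmain]
    _ ≤ Real.exp ((Real.exp 2⁻¹ / (1 - Real.exp 2⁻¹ / 2)) * σ * Real.log p / p) := by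
        linarith [Real.add_one_le_exp ((Real.exp 2⁻¹ / (1 - Real.exp 2⁻¹ / 2)) * σ * Real.log p / p)]

section Core
variable {z : ℝ}

lemma key_sum_bound (hz : 2 ≤ z) (M : ℕ) :
    ∑ m ∈ Icc 1 M, ((smoothPart z m : ℝ)) ^ ((2 * Real.log z)⁻¹) ≤
      Real.exp (2 * (Real.exp 2⁻¹ / (1 - Real.exp 2⁻¹ / 2))) * M := by
  classical
  rcases Nat.eq_zero_or_pos M with rfl | hM
  · simp
  set σ : ℝ := (2 * Real.log z)⁻¹ with hσdef
  set A : ℝ := Real.exp 2⁻¹ / (1 - Real.exp 2⁻¹ / 2) with hAdef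
  have hz1 : (1:ℝ) < z := lt_of_lt_of_le one_lt_two hz
  have hlogz : 0 < Real.log z := Real.log_pos hz1
  have hσpos : 0 < σ := by positivity
  have hE2 : Real.exp 2⁻¹ < 2 := by
    nlinarith [Real.exp_one_lt_d9, Real.exp_pos (2⁻¹:ℝ),
      Real.exp_add (2⁻¹:ℝ) 2⁻¹, sq_nonneg (Real.exp 2⁻¹ - 2)]
  have hApos : 0 < A := by
    rw [hAdef]
    apply div_pos (Real.exp_pos _)
    linarith
  set zN : ℕ := ⌊z⌋₊ with hzNdef
  have hzN2 : 2 ≤ zN := Nat.le_floor (by exact_mod_cast hz)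
  have hzNz : (zN : ℝ) ≤ z := Nat.floor_le (by positivity)
  -- the multiplicative weight
  set g : ℕ → ℝ := fun d => ∏ p ∈ d.primeFactors, fg σ p (d.factorization p) with hgdef
  have hprime_one_le : ∀ d : ℕ, ∀ p ∈ d.primeFactors, (1:ℝ) ≤ (p:ℕ) := by
    intro d p hp
    exact_mod_cast (Nat.prime_of_mem_primeFactors hp).one_lt.le
  have hgnonneg : ∀ d, 0 ≤ g d := by
    intro d
    exact Finset.prod_nonneg fun p hp => fg_nonneg hσpos.le (hprime_one_le d p hp) _
  -- Step 1 : rankin expansion over divisors of the smooth part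
  have step1 : ∀ m : ℕ, m ≠ 0 →
      ((smoothPart z m : ℝ)) ^ σ = ∑ d ∈ (smoothPart z m).divisors, g d := by
    intro m hm
    set w : ℕ := smoothPart z m with hwdef
    have hw : w ≠ 0 := (smoothPart_pos z m).ne'
    rw [hgdef]
    rw [sum_divisors_prod_fact (fg σ) (fun p => fg_zero σ p) hw]
    have hinner : ∀ p ∈ w.primeFactors,
        ∑ j ∈ range (w.factorization p + 1), fg σ p j = (p:ℝ) ^ (σ * (w.factorization p)) := by
      intro p hp
      exact fg_telescope σ (Nat.prime_of_mem_primeFactors hp).pos _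
    rw [Finset.prod_congr rfl hinner]
    have hwprod : (w:ℝ) = ∏ p ∈ w.primeFactors, ((p:ℝ)) ^ (w.factorization p) := by
      conv_lhs => rw [← Nat.factorization_prod_pow_eq_self hw]
      push_cast
      rfl
    rw [hwprod, ← Real.finset_prod_rpow _ _ (fun p _ => by positivity) σ]
    apply Finset.prod_congr rfl
    intro p hp
    have hp0 : (0:ℝ) ≤ (p:ℝ) := by positivity
    rw [← Real.rpow_natCast ((p:ℝ)) (w.factorization p), ← Real.rpow_mul hp0, mul_comm]
  -- the index set of smooth numbers up to M
  set D : Finset ℕ := (Icc 1 M).filter (fun d => ∀ p ∈ d.primeFactors, p ≤ zN) with hDdef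
  -- divisors of smoothPart of m ≤ M form a sub-filter of D
  have hdiv_eq : ∀ m ∈ Icc 1 M,
      (smoothPart z m).divisors = D.filter (fun d => d ∣ smoothPart z m) := by
    intro m hm
    rw [Finset.mem_Icc] at hm
    have hm0 : m ≠ 0 := by omega
    have hw : smoothPart z m ≠ 0 := (smoothPart_pos z m).ne'
    ext d
    simp only [Nat.mem_divisors, hDdef, Finset.mem_filter, Finset.mem_Icc]
    constructor
    · rintro ⟨hd, -⟩
      have hd0 : d ≠ 0 := by
        rintro rfl
        exact hw (Nat.eq_zero_of_zero_dvd hd)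
      have hdm : d ∣ m := hd.trans (smoothPart_dvd z m)
      refine ⟨⟨⟨Nat.one_le_iff_ne_zero.mpr hd0, (Nat.le_of_dvd (by omega) hdm).trans hm.2⟩, ?_⟩, hd⟩
      intro p hp
      have hpd : (p:ℕ) ∣ d := Nat.dvd_of_mem_primeFactors hp
      have := smoothPart_primes_le (z := z) (m := m) (Nat.prime_of_mem_primeFactors hp)
        (hpd.trans hd)
      rw [hzNdef]
      exact Nat.le_floor this
    · rintro ⟨-, hd⟩
      exact ⟨hd, hw⟩
  -- Step 2: swap the order of summation
  have step2 : ∑ m ∈ Icc 1 M, ((smoothPart z m : ℝ)) ^ σ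
      ≤ (M:ℝ) * ∑ d ∈ D, g d / d := by
    calc ∑ m ∈ Icc 1 M, ((smoothPart z m : ℝ)) ^ σ
        = ∑ m ∈ Icc 1 M, ∑ d ∈ (smoothPart z m).divisors, g d := by
          apply Finset.sum_congr rfl
          intro m hm
          rw [Finset.mem_Icc] at hm
          exact step1 m (by omega)
      _ = ∑ m ∈ Icc 1 M, ∑ d ∈ D, if d ∣ smoothPart z m then g d else 0 := by
          apply Finset.sum_congr rfl
          intro m hm
          rw [hdiv_eq m hm, Finset.sum_filter]
      _ = ∑ d ∈ D, ∑ m ∈ Icc 1 M, if d ∣ smoothPart z m then g d else 0 := Finset.sum_comm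
      _ = ∑ d ∈ D, ((Icc 1 M).filter (fun m => d ∣ smoothPart z m)).card * g d := by
          apply Finset.sum_congr rfl
          intro d _
          rw [← Finset.sum_filter, Finset.sum_const, nsmul_eq_mul]
      _ ≤ ∑ d ∈ D, (M:ℝ) / d * g d := by
          apply Finset.sum_le_sum
          intro d hd
          apply mul_le_mul_of_nonneg_right _ (hgnonneg d)
          have hd1 : 1 ≤ d := by
            rw [hDdef, Finset.mem_filter, Finset.mem_Icc] at hd
            exact hd.1.1
          have hcard : ((Icc 1 M).filter (fun m => d ∣ smoothPart z m)).card ≤ M / d := by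
            calc ((Icc 1 M).filter (fun m => d ∣ smoothPart z m)).card
                ≤ ((Icc 1 M).filter (fun m => d ∣ m)).card := by
                  apply Finset.card_le_card
                  intro m hm
                  rw [Finset.mem_filter] at hm ⊢
                  exact ⟨hm.1, hm.2.trans (smoothPart_dvd z m)⟩
              _ = M / d := by
                  rw [show Icc 1 M = Ioc 0 M from rfl]
                  exact Nat.Ioc_filter_dvd_card_eq_div M d
          calc (((Icc 1 M).filter (fun m => d ∣ smoothPart z m)).card : ℝ)
              ≤ ((M / d : ℕ) : ℝ) := by exact_mod_cast hcard
            _ ≤ (M:ℝ) / d := Nat.cast_div_le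
      _ = (M:ℝ) * ∑ d ∈ D, g d / d := by
          rw [Finset.mul_sum]
          apply Finset.sum_congr rfl
          intro d _
          ring
  -- Step 3: rewrite g d / d as a factorization product
  have step3 : ∀ d ∈ D, g d / d = ∏ p ∈ d.primeFactors,
      (fg σ p (d.factorization p) / (p:ℝ) ^ (d.factorization p)) := by
    intro d hd
    have hd1 : d ≠ 0 := by
      rw [hDdef, Finset.mem_filter, Finset.mem_Icc] at hd
      omega
    have hdprod : (d:ℝ) = ∏ p ∈ d.primeFactors, ((p:ℝ)) ^ (d.factorization p) := by
      conv_lhs => rw [← Nat.factorization_prod_pow_eq_self hd1]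
      push_cast
      rfl
    rw [hdprod]
    exact (Finset.prod_div_distrib _ _).symm
  -- Step 4: extend to divisors of a large smooth modulus
  set P : Finset ℕ := (range (M+1)).filter (fun p => p.Prime ∧ p ≤ zN) with hPdef
  set MM : ℕ := ∏ p ∈ P, p ^ M with hMMdef
  have hPprime : ∀ q ∈ P, q.Prime := fun q hq => ((Finset.mem_filter.mp hq).2).1
  have hMM0 : MM ≠ 0 := by
    rw [hMMdef]
    exact Finset.prod_ne_zero_iff.mpr fun q hq => pow_ne_zero _ (hPprime q hq).ne_zero
  have hDsub : D ⊆ MM.divisors := by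
    intro d hd
    rw [hDdef, Finset.mem_filter, Finset.mem_Icc] at hd
    obtain ⟨⟨hd1, hdM⟩, hsmooth⟩ := hd
    have hd0 : d ≠ 0 := by omega
    rw [Nat.mem_divisors]
    refine ⟨?_, hMM0⟩
    have hsub : d.primeFactors ⊆ P := by
      intro q hq
      have hqp := Nat.prime_of_mem_primeFactors hq
      have hqd : q ∣ d := Nat.dvd_of_mem_primeFactors hq
      have hqM : q ≤ M := (Nat.le_of_dvd (by omega) hqd).trans hdM
      rw [hPdef, Finset.mem_filter, Finset.mem_range]
      exact ⟨by omega, hqp, hsmooth q hq⟩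
    calc d = ∏ q ∈ d.primeFactors, q ^ d.factorization q :=
          (Nat.factorization_prod_pow_eq_self hd0).symm
      _ ∣ ∏ q ∈ d.primeFactors, q ^ M := Finset.prod_dvd_prod_of_dvd _ _
          (fun q hq => pow_dvd_pow q ((Nat.factorization_lt q hd0).le.trans hdM))
      _ ∣ MM := by rw [hMMdef]; exact Finset.prod_dvd_prod_of_subset _ _ _ hsub
  have hfh0 : ∀ p : ℕ, fg σ p 0 / (p:ℝ)^(0:ℕ) = 1 := by intro p; simp [fg_zero]
  have hAσ : (0:ℝ) ≤ A * σ := (mul_pos hApos hσpos).le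
  have step4 : ∑ d ∈ D, g d / d ≤ Real.exp (2 * A) := by
    calc ∑ d ∈ D, g d / d
        = ∑ d ∈ D, ∏ p ∈ d.primeFactors,
            (fg σ p (d.factorization p) / (p:ℝ) ^ (d.factorization p)) :=
          Finset.sum_congr rfl step3
      _ ≤ ∑ d ∈ MM.divisors, ∏ p ∈ d.primeFactors,
            (fg σ p (d.factorization p) / (p:ℝ) ^ (d.factorization p)) := by
          apply Finset.sum_le_sum_of_subset_of_nonneg hDsub
          intro d _ _
          apply Finset.prod_nonneg
          intro p hp
          exact div_nonneg (fg_nonneg hσpos.le (hprime_one_le d p hp) _) (by positivity)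
      _ = ∏ p ∈ MM.primeFactors, ∑ j ∈ range (MM.factorization p + 1), fg σ p j / (p:ℝ)^j :=
          sum_divisors_prod_fact (fun p j => fg σ p j / (p:ℝ)^j) hfh0 hMM0
      _ ≤ ∏ p ∈ MM.primeFactors, Real.exp (A * σ * Real.log p / p) := by
          apply Finset.prod_le_prod
          · intro p hp
            apply Finset.sum_nonneg
            intro j _
            exact div_nonneg (fg_nonneg hσpos.le (hprime_one_le MM p hp) _) (by positivity)
          · intro p hp
            have hpP : p ∈ P := prime_mem_of_dvd_prod_pow hPprime
              (Nat.prime_of_mem_primeFactors hp)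
              (by rw [← hMMdef]; exact Nat.dvd_of_mem_primeFactors hp)
            have hpz : (p:ℝ) ≤ z := by
              rw [hPdef, Finset.mem_filter] at hpP
              calc (p:ℝ) ≤ (zN:ℝ) := by exact_mod_cast hpP.2.2
                _ ≤ z := hzNz
            have := local_factor_le hz (Nat.prime_of_mem_primeFactors hp) hpz (MM.factorization p)
            rw [hσdef, hAdef]
            exact this
      _ = Real.exp (∑ p ∈ MM.primeFactors, A * σ * Real.log p / p) := (Real.exp_sum _ _).symm
      _ ≤ Real.exp (2 * A) := by
          apply Real.exp_le_exp.mpr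
          have hsub2 : MM.primeFactors ⊆ (range (zN+1)).filter Nat.Prime := by
            intro p hp
            have hpP : p ∈ P := prime_mem_of_dvd_prod_pow hPprime
              (Nat.prime_of_mem_primeFactors hp)
              (by rw [← hMMdef]; exact Nat.dvd_of_mem_primeFactors hp)
            rw [hPdef, Finset.mem_filter, Finset.mem_range] at hpP
            rw [Finset.mem_filter, Finset.mem_range]
            have := hpP.2.2
            exact ⟨by omega, hpP.2.1⟩
          have hzN0 : (0:ℝ) < (zN:ℝ) := by exact_mod_cast Nat.lt_of_lt_of_le Nat.zero_lt_two hzN2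
          calc ∑ p ∈ MM.primeFactors, A * σ * Real.log p / p
              = A * σ * ∑ p ∈ MM.primeFactors, Real.log p / p := by
                rw [Finset.mul_sum]
                exact Finset.sum_congr rfl fun p _ => by ring
            _ ≤ A * σ * ∑ p ∈ (range (zN+1)).filter Nat.Prime, Real.log p / p := by
                apply mul_le_mul_of_nonneg_left _ hAσ
                apply Finset.sum_le_sum_of_subset_of_nonneg hsub2
                intro p hp _
                have hp2 : 1 ≤ (p:ℝ) := by
                  exact_mod_cast ((Finset.mem_filter.mp hp).2).one_lt.le
                exact div_nonneg (Real.log_nonneg hp2) (by positivity)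
            _ ≤ A * σ * (4 * Real.log zN) :=
                mul_le_mul_of_nonneg_left (mertens zN (by omega)) hAσ
            _ ≤ A * σ * (4 * Real.log z) := by
                apply mul_le_mul_of_nonneg_left _ hAσ
                have : Real.log zN ≤ Real.log z := Real.log_le_log hzN0 hzNz
                linarith
            _ = 2 * A := by
                rw [hσdef]
                have h2lz : (2 * Real.log z) ≠ 0 := by positivity
                field_simp
                ring
  calc ∑ m ∈ Icc 1 M, ((smoothPart z m : ℝ)) ^ σ ≤ (M:ℝ) * ∑ d ∈ D, g d / d := step2
    _ ≤ (M:ℝ) * Real.exp (2*A) := mul_le_mul_of_nonneg_left step4 (by positivity)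
    _ = Real.exp (2 * A) * M := by ring

end Core



theorem stmt_15 (k : ℕ) (hk : 1 ≤ k) (h : Fin k → ℕ) (hinj : Function.Injective h) :
    ∃ C : ℝ, 0 < C ∧ ∀ (f : ℕ → ℂ)
      (_hf : ∀ n, ‖f n‖ ≤ 1)
      (u x z : ℝ) (_hu : 1 ≤ u) (_hz : 1 < z) (_hx : z ^ u ≤ x),
      ‖∑ n ∈ Finset.Icc 1 ⌊x⌋₊, ∏ i, f (n + h i)
          - ∑ n ∈ (Finset.Icc 1 ⌊x⌋₊).filter
              (fun n : ℕ => ∀ i, (smoothPart z (n + h i) : ℝ) ≤ z ^ u),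
            ∏ i, f (n + h i)‖ ≤
        C * (x * Real.exp (-u / 2) + 1) := by
  classical
  set H : ℕ := Finset.univ.sup h with hHdef
  set A : ℝ := Real.exp 2⁻¹ / (1 - Real.exp 2⁻¹ / 2) with hAdef
  set C₀ : ℝ := Real.exp (2 * A) with hC0def
  have hC0pos : 0 < C₀ := Real.exp_pos _
  have hkpos : (0:ℝ) < k := by exact_mod_cast hk
  refine ⟨(k * (H+1)) * C₀, by positivity, ?_⟩
  intro f hf u x z hu hz hx
  have hz0 : (0:ℝ) < z := lt_trans one_pos hz
  have hzu1 : (1:ℝ) ≤ z ^ u := by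
    calc (1:ℝ) = z ^ (0:ℝ) := (Real.rpow_zero z).symm
      _ ≤ z ^ u := Real.rpow_le_rpow_of_exponent_le hz.le (by linarith)
  have hx0 : (0:ℝ) ≤ x := le_trans (by linarith) hx
  have hexpu : Real.exp (-u/2) ≤ 1 := Real.exp_le_one_iff.mpr (by linarith)
  have hRHSpos : 0 ≤ x * Real.exp (-u/2) + 1 := by positivity
  by_cases hz2 : z < 2
  · -- no primes at most z : the filter condition is trivially true
    have hsp1 : ∀ m : ℕ, smoothPart z m = 1 := by
      intro m
      rw [smoothPart]
      have : m.primeFactors.filter (fun p : ℕ => (p : ℝ) ≤ z) = ∅ := by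
        rw [Finset.filter_eq_empty_iff]
        intro p hp
        have := (Nat.prime_of_mem_primeFactors hp).two_le
        have : (2:ℝ) ≤ (p:ℝ) := by exact_mod_cast this
        push_neg
        linarith
      rw [this, Finset.prod_empty]
    have hfilter : (Finset.Icc 1 ⌊x⌋₊).filter
        (fun n : ℕ => ∀ i, (smoothPart z (n + h i) : ℝ) ≤ z ^ u) = Finset.Icc 1 ⌊x⌋₊ := by
      apply Finset.filter_true_of_mem
      intro n _ i
      rw [hsp1]
      exact_mod_cast hzu1
    rw [hfilter, sub_self]
    rw [norm_zero]
    positivity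
  push_neg at hz2
  set σ : ℝ := (2 * Real.log z)⁻¹ with hσdef
  have hz1 : (1:ℝ) < z := hz
  have hlogz : 0 < Real.log z := Real.log_pos hz1
  have hσpos : 0 < σ := by positivity
  set N : ℕ := ⌊x⌋₊ with hNdef
  set M : ℕ := N + H with hMdef
  -- the bad sets
  set cond : ℕ → Prop := fun n => ∀ i, (smoothPart z (n + h i) : ℝ) ≤ z ^ u with hconddef
  set Bad : Finset ℕ := (Finset.Icc 1 N).filter (fun n => ¬ cond n) with hBaddef
  set BM : Finset ℕ := (Finset.Icc 1 M).filter (fun m => ¬ (smoothPart z m : ℝ) ≤ z ^ u)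
    with hBMdef
  -- the difference is the sum over the bad set
  have hsplit := Finset.sum_filter_add_sum_filter_not (Finset.Icc 1 N) cond
    (fun n => ∏ i, f (n + h i))
  have hdiff : ∑ n ∈ Finset.Icc 1 N, ∏ i, f (n + h i)
      - ∑ n ∈ (Finset.Icc 1 N).filter cond, ∏ i, f (n + h i)
      = ∑ n ∈ Bad, ∏ i, f (n + h i) := by
    rw [← hsplit, hBaddef]
    ring
  rw [hdiff]
  -- bound by the cardinality of the bad set
  have habs : ‖∑ n ∈ Bad, ∏ i, f (n + h i)‖ ≤ (Bad.card : ℝ) := by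
    calc ‖∑ n ∈ Bad, ∏ i, f (n + h i)‖
        ≤ ∑ n ∈ Bad, ‖∏ i, f (n + h i)‖ := norm_sum_le _ _
      _ ≤ ∑ n ∈ Bad, 1 := by
          apply Finset.sum_le_sum
          intro n _
          rw [norm_prod]
          exact Finset.prod_le_one (fun i _ => norm_nonneg _) (fun i _ => hf _)
      _ = (Bad.card : ℝ) := by rw [Finset.sum_const, nsmul_eq_mul, mul_one]
  -- bad set is covered by the shifted bad sets
  have hcover : Bad.card ≤ k * BM.card := by
    have hsubset : Bad ⊆ Finset.univ.biUnion (fun i : Fin k =>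
        (Finset.Icc 1 N).filter (fun n => ¬ (smoothPart z (n + h i) : ℝ) ≤ z ^ u)) := by
      intro n hn
      rw [hBaddef, Finset.mem_filter] at hn
      obtain ⟨hn1, hn2⟩ := hn
      simp only [hconddef, not_forall] at hn2
      obtain ⟨i, hi⟩ := hn2
      rw [Finset.mem_biUnion]
      exact ⟨i, Finset.mem_univ i, Finset.mem_filter.mpr ⟨hn1, hi⟩⟩
    have hcardi : ∀ i : Fin k,
        ((Finset.Icc 1 N).filter (fun n => ¬ (smoothPart z (n + h i) : ℝ) ≤ z ^ u)).card
          ≤ BM.card := by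
      intro i
      apply Finset.card_le_card_of_injOn (fun n => n + h i)
      · intro n hn
        rw [Finset.mem_coe, Finset.mem_filter, Finset.mem_Icc] at hn
        show n + h i ∈ BM
        rw [hBMdef, Finset.mem_filter, Finset.mem_Icc]
        have hhi : h i ≤ H := Finset.le_sup (Finset.mem_univ i)
        have hMeq : M = N + H := hMdef
        exact ⟨⟨by omega, by omega⟩, hn.2⟩
      · intro a _ b _ hab
        have : a + h i = b + h i := hab
        omega
    calc Bad.card ≤ (Finset.univ.biUnion (fun i : Fin k =>
          (Finset.Icc 1 N).filter (fun n => ¬ (smoothPart z (n + h i) : ℝ) ≤ z ^ u))).card :=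
            Finset.card_le_card hsubset
      _ ≤ ∑ i : Fin k, ((Finset.Icc 1 N).filter
            (fun n => ¬ (smoothPart z (n + h i) : ℝ) ≤ z ^ u)).card := Finset.card_biUnion_le
      _ ≤ ∑ _i : Fin k, BM.card := Finset.sum_le_sum fun i _ => hcardi i
      _ = k * BM.card := by rw [Finset.sum_const, Finset.card_univ, Fintype.card_fin,
            smul_eq_mul]
  -- Rankin bound on the bad count
  have hrankin : (BM.card : ℝ) ≤ Real.exp (-u/2) * (C₀ * M) := by
    have hpoint : ∀ m ∈ BM, (1:ℝ) ≤ (smoothPart z m : ℝ) ^ σ * Real.exp (-u/2) := by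
      intro m hm
      rw [hBMdef, Finset.mem_filter] at hm
      have hlt : z ^ u < (smoothPart z m : ℝ) := by
        push_neg at hm
        exact hm.2
      have h1 : (z ^ u) ^ σ ≤ (smoothPart z m : ℝ) ^ σ :=
        Real.rpow_le_rpow (by positivity) hlt.le hσpos.le
      have h2 : (z ^ u) ^ σ = Real.exp (u / 2) := by
        rw [← Real.rpow_mul hz0.le, Real.rpow_def_of_pos hz0]
        congr 1
        rw [hσdef]
        field_simp
      have h3 : Real.exp (u/2) * Real.exp (-u/2) = 1 := by
        rw [← Real.exp_add]
        rw [show u/2 + -u/2 = 0 by ring, Real.exp_zero]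
      calc (1:ℝ) = Real.exp (u/2) * Real.exp (-u/2) := h3.symm
        _ ≤ (smoothPart z m : ℝ) ^ σ * Real.exp (-u/2) := by
            apply mul_le_mul_of_nonneg_right _ (Real.exp_pos _).le
            rw [← h2]
            exact h1
    calc (BM.card : ℝ) = ∑ _m ∈ BM, (1:ℝ) := by
          rw [Finset.sum_const, nsmul_eq_mul, mul_one]
      _ ≤ ∑ m ∈ BM, (smoothPart z m : ℝ) ^ σ * Real.exp (-u/2) := Finset.sum_le_sum hpoint
      _ ≤ ∑ m ∈ Finset.Icc 1 M, (smoothPart z m : ℝ) ^ σ * Real.exp (-u/2) := by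
          apply Finset.sum_le_sum_of_subset_of_nonneg
          · rw [hBMdef]; exact Finset.filter_subset _ _
          · intro m _ _
            positivity
      _ = (∑ m ∈ Finset.Icc 1 M, (smoothPart z m : ℝ) ^ σ) * Real.exp (-u/2) := by
          rw [← Finset.sum_mul]
      _ ≤ (C₀ * M) * Real.exp (-u/2) := by
          apply mul_le_mul_of_nonneg_right _ (Real.exp_pos _).le
          have := key_sum_bound hz2 M
          rw [hσdef, hC0def, hAdef]
          exact this
      _ = Real.exp (-u/2) * (C₀ * M) := by ring
  -- put everything together
  have hNx : (N:ℝ) ≤ x := Nat.floor_le hx0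
  have hMx : (M:ℝ) ≤ x + H := by
    rw [hMdef]
    push_cast
    linarith
  have hHnn : (0:ℝ) ≤ H := by positivity
  calc ‖∑ n ∈ Bad, ∏ i, f (n + h i)‖
      ≤ (Bad.card : ℝ) := habs
    _ ≤ (k : ℝ) * BM.card := by exact_mod_cast hcover
    _ ≤ (k : ℝ) * (Real.exp (-u/2) * (C₀ * M)) := by
        apply mul_le_mul_of_nonneg_left hrankin (by positivity)
    _ ≤ (k : ℝ) * (Real.exp (-u/2) * (C₀ * (x + H))) := by
        apply mul_le_mul_of_nonneg_left _ (by positivity)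
        apply mul_le_mul_of_nonneg_left _ (Real.exp_pos _).le
        exact mul_le_mul_of_nonneg_left hMx hC0pos.le
    _ ≤ (k * (H+1)) * C₀ * (x * Real.exp (-u/2) + 1) := by
        have hexppos : (0:ℝ) < Real.exp (-u/2) := Real.exp_pos _
        have hxe : (0:ℝ) ≤ x * Real.exp (-u/2) := by positivity
        have hkey : Real.exp (-u/2) * (x + H) ≤ (H+1) * (x * Real.exp (-u/2) + 1) := by
          have h1 : Real.exp (-u/2) * H ≤ H := by nlinarith
          nlinarith
        have hknn : (0:ℝ) ≤ (k:ℝ) := hkpos.le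
        calc (k : ℝ) * (Real.exp (-u/2) * (C₀ * (x + H)))
            = (k : ℝ) * C₀ * (Real.exp (-u/2) * (x + H)) := by ring
          _ ≤ (k : ℝ) * C₀ * ((H+1) * (x * Real.exp (-u/2) + 1)) := by
              apply mul_le_mul_of_nonneg_left hkey (by positivity)
          _ = (k * (H+1)) * C₀ * (x * Real.exp (-u/2) + 1) := by push_cast; ring
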